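/- Let H be an ℓ-bounded family of sets on a ground set X with |H| > (r-1)^ℓ. If H contains no r-sunflower, then there exist distinct elements x, y ∈ X and sets S_x, S_y, S_xy ∈ H such that {x,y} ∩ S_x = {x}, {x,y} ∩ S_y = {y}, and {x,y} ∩ S_xy = {x,y}. -/

import Mathlib

/-- A family of `r` distinct sets is an `r`-sunflower if all pairwise
intersections of distinct members coincide. -/
def IsSunflower {α : Type*} [DecidableEq α] (r : ℕ) (P : Finset (Finset α)) : Prop :=
  P.card = r ∧ ∀ A ∈ P, ∀ B ∈ P, ∀ A' ∈ P, ∀ B' ∈ P,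
    A ≠ B → A' ≠ B' → A ∩ B = A' ∩ B'

/-- `H` contains an `r`-sunflower. -/
def HasSunflower {α : Type*} [DecidableEq α] (H : Finset (Finset α)) (r : ℕ) : Prop :=
  ∃ P ⊆ H, IsSunflower r P

section Aux

variable {α : Type*} [DecidableEq α]

lemma pair_inter_left {x y : α} {S : Finset α} (hx : x ∈ S) (hy : y ∉ S) :
    ({x, y} : Finset α) ∩ S = {x} := by
  ext a
  simp only [Finset.mem_inter, Finset.mem_insert, Finset.mem_singleton]
  constructor
  · rintro ⟨rfl | rfl, ha⟩
    · rfl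
    · exact absurd ha hy
  · rintro rfl; exact ⟨Or.inl rfl, hx⟩

lemma exists_top (R : α → α → Prop) (htrans : ∀ a b c, R a b → R b c → R a c)
    (S : Finset α) : S.Nonempty → (∀ u ∈ S, ∀ v ∈ S, R u v ∨ R v u) →
    ∃ m ∈ S, ∀ u ∈ S, R u m := by
  induction S using Finset.cons_induction_on with
  | empty => intro hS _; exact absurd hS (by simp)
  | @cons a s ha ih =>
    intro _ tot
    have hrefl : ∀ u ∈ Finset.cons a s ha, R u u :=
      fun u hu => (tot u hu u hu).elim id id
    rcases s.eq_empty_or_nonempty with rfl | hs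
    · refine ⟨a, by simp, ?_⟩
      intro u hu
      have hua : u = a := by simpa using hu
      rw [hua]
      exact hrefl a (by simp)
    · obtain ⟨m, hm, hmax⟩ := ih hs
        (fun u hu v hv => tot u (by simp [hu]) v (by simp [hv]))
      rcases tot a (by simp) m (by simp [hm]) with h | h
      · refine ⟨m, by simp [hm], ?_⟩
        intro u hu
        rcases Finset.mem_cons.1 hu with h' | hu'
        · rw [h']; exact h
        · exact hmax u hu'
      · refine ⟨a, by simp, ?_⟩
        intro u hu
        rcases Finset.mem_cons.1 hu with h' | hu'
        · rw [h']; exact hrefl a (by simp)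
        · exact htrans u m a (hmax u hu') h

/-- Key counting lemma: an `ℓ`-bounded family with no `r`-sunflower and no
"pair pattern" has at most `(r-1)^ℓ` members. -/
lemma bound_card (r : ℕ) (hr : 2 ≤ r) :
    ∀ (ℓ : ℕ) (H : Finset (Finset α)),
      (∀ S ∈ H, S.card ≤ ℓ) → ¬ HasSunflower H r →
      (¬ ∃ x y : α, x ≠ y ∧ ∃ Sx ∈ H, ∃ Sy ∈ H, ∃ Sxy ∈ H,
        ({x, y} : Finset α) ∩ Sx = {x} ∧ ({x, y} : Finset α) ∩ Sy = {y} ∧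
        ({x, y} : Finset α) ∩ Sxy = {x, y}) →
      H.card ≤ (r - 1) ^ ℓ := by
  intro ℓ
  induction ℓ with
  | zero =>
    intro H hb _ _
    have hsub : H ⊆ {∅} := by
      intro S hS
      have := hb S hS
      simp only [Finset.mem_singleton]
      exact Finset.card_eq_zero.1 (Nat.le_zero.1 this)
    calc H.card ≤ ({∅} : Finset (Finset α)).card := Finset.card_le_card hsub
      _ = 1 := Finset.card_singleton _
      _ = (r - 1) ^ 0 := (pow_zero _).symm
  | succ ℓ ih =>
    intro H hb hno hpat
    classical
    -- comparability of co-occurring elements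
    have comp : ∀ S ∈ H, ∀ u ∈ S, ∀ v ∈ S,
        (∀ T ∈ H, u ∈ T → v ∈ T) ∨ (∀ T ∈ H, v ∈ T → u ∈ T) := by
      intro S hS u hu v hv
      by_cases huv : u = v
      · subst huv; exact Or.inl fun T _ h => h
      by_contra hcon
      push_neg at hcon
      obtain ⟨⟨Sx, hSx, hux, hvx⟩, ⟨Sy, hSy, hvy, huy⟩⟩ := hcon
      exact hpat ⟨u, v, huv, Sx, hSx, Sy, hSy, S, hS,
        pair_inter_left hux hvx,
        by rw [Finset.pair_comm]; exact pair_inter_left hvy huy,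
        Finset.inter_eq_left.2 (by
          intro a ha
          rcases Finset.mem_insert.1 ha with rfl | ha
          · exact hu
          · rw [Finset.mem_singleton] at ha; subst ha; exact hv)⟩
    -- maximal pairwise disjoint subfamily
    set 𝒟 : Finset (Finset (Finset α)) :=
      H.powerset.filter (fun D => ∀ A ∈ D, ∀ B ∈ D, A ≠ B → A ∩ B = ∅) with h𝒟
    have hmem𝒟 : ∀ D : Finset (Finset α),
        D ∈ 𝒟 ↔ D ⊆ H ∧ ∀ A ∈ D, ∀ B ∈ D, A ≠ B → A ∩ B = ∅ := by
      intro D; simp [h𝒟]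
    obtain ⟨D, hD𝒟, hmax⟩ : ∃ D ∈ 𝒟, ∀ x ∈ 𝒟, ¬ D < x := by
      obtain ⟨D, hD⟩ := Finset.exists_maximal (s := 𝒟) ⟨∅, (hmem𝒟 ∅).2 (by simp)⟩
      exact ⟨D, hD.1, fun x hx hlt => lt_irrefl D (lt_of_lt_of_le hlt (hD.2 hx hlt.le))⟩
    obtain ⟨hDsub, hDdisj⟩ := (hmem𝒟 D).1 hD𝒟
    -- D has fewer than r members
    have hDcard : D.card ≤ r - 1 := by
      by_contra h
      push_neg at h
      obtain ⟨P, hPD, hPcard⟩ := Finset.exists_subset_card_eq (s := D) (n := r) (by omega)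
      refine hno ⟨P, hPD.trans hDsub, hPcard, ?_⟩
      intro A hA B hB A' hA' B' hB' hAB hA'B'
      rw [hDdisj A (hPD hA) B (hPD hB) hAB, hDdisj A' (hPD hA') B' (hPD hB') hA'B']
    -- every set not in D meets some member of D
    have hcover : ∀ T ∈ H, T ∉ D → ∃ S ∈ D, (S ∩ T).Nonempty := by
      intro T hT hTD
      by_contra h
      push_neg at h
      have hmem : insert T D ∈ 𝒟 := by
        refine (hmem𝒟 _).2 ⟨Finset.insert_subset hT hDsub, ?_⟩
        intro A hA B hB hAB
        rcases Finset.mem_insert.1 hA with rfl | hA' <;>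
          rcases Finset.mem_insert.1 hB with rfl | hB'
        · exact absurd rfl hAB
        · rw [Finset.inter_comm]
          exact h B hB'
        · exact h A hA'
        · exact hDdisj A hA' B hB' hAB
      exact hmax _ hmem (Finset.ssubset_insert hTD)
    -- tops of nonempty members of D
    set Dn : Finset (Finset α) := D.filter (fun S => S.Nonempty) with hDn
    have htopex : ∀ S ∈ Dn, ∃ m ∈ S, ∀ u ∈ S, ∀ T ∈ H, u ∈ T → m ∈ T := by
      intro S hS
      rw [hDn, Finset.mem_filter] at hS
      obtain ⟨m, hm, hmax'⟩ := exists_top (fun u v => ∀ T ∈ H, u ∈ T → v ∈ T)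
        (fun a b c hab hbc T hT ha => hbc T hT (hab T hT ha))
        S hS.2 (fun u hu v hv => comp S (hDsub hS.1) u hu v hv)
      exact ⟨m, hm, hmax'⟩
    choose f hf1 hf2 using htopex
    set M : Finset α := Dn.attach.image (fun S => f S.1 S.2) with hM
    have hMcard : M.card ≤ Dn.card := by
      calc M.card ≤ Dn.attach.card := Finset.card_image_le
        _ = Dn.card := Finset.card_attach
    -- link families are small
    have hlink : ∀ m : α, (H.filter (fun T => m ∈ T)).card ≤ (r - 1) ^ ℓ := by
      intro m
      set Hm := H.filter (fun T => m ∈ T) with hHm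
      have hmemHm : ∀ T, T ∈ Hm ↔ T ∈ H ∧ m ∈ T := by intro T; simp [hHm]
      set L : Finset (Finset α) := Hm.image (fun T => T.erase m) with hL
      have hinj : Set.InjOn (fun T : Finset α => T.erase m) (↑Hm : Set (Finset α)) := by
        intro A hA B hB hAB
        have hA2 := (hmemHm A).1 (Finset.mem_coe.1 hA)
        have hB2 := (hmemHm B).1 (Finset.mem_coe.1 hB)
        rw [← Finset.insert_erase hA2.2, ← Finset.insert_erase hB2.2]
        simp only at hAB
        rw [hAB]
      have hcardL : Hm.card = L.card := (Finset.card_image_of_injOn hinj).symm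
      have hmnotL : ∀ S ∈ L, m ∉ S := by
        intro S hS
        obtain ⟨T, _, rfl⟩ := Finset.mem_image.1 hS
        exact Finset.notMem_erase m T
      rw [hcardL]
      apply ih L
      · intro S hS
        obtain ⟨T, hT, rfl⟩ := Finset.mem_image.1 hS
        rw [hmemHm] at hT
        have h1 := hb T hT.1
        have h2 : (T.erase m).card = T.card - 1 := Finset.card_erase_of_mem hT.2
        omega
      · rintro ⟨P, hPL, hPcard, hPint⟩
        apply hno
        have hinj2 : Set.InjOn (insert m) (↑P : Set (Finset α)) := by
          intro A hA B hB hAB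
          have hA' := hmnotL A (hPL hA)
          have hB' := hmnotL B (hPL hB)
          rw [← Finset.erase_insert hA', ← Finset.erase_insert hB', hAB]
        refine ⟨P.image (insert m), ?_, ?_, ?_⟩
        · intro T hT
          obtain ⟨A, hA, rfl⟩ := Finset.mem_image.1 hT
          obtain ⟨T', hT', hT'e⟩ := Finset.mem_image.1 (hPL hA)
          rw [hmemHm] at hT'
          rw [← hT'e, Finset.insert_erase hT'.2]
          exact hT'.1
        · rw [Finset.card_image_of_injOn hinj2, hPcard]
        · intro A hA B hB A' hA' B' hB' hAB hA'B'
          obtain ⟨a, ha, rfl⟩ := Finset.mem_image.1 hA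
          obtain ⟨b, hb', rfl⟩ := Finset.mem_image.1 hB
          obtain ⟨a', ha', rfl⟩ := Finset.mem_image.1 hA'
          obtain ⟨b', hb'', rfl⟩ := Finset.mem_image.1 hB'
          have hab : a ≠ b := fun h => hAB (by rw [h])
          have hab' : a' ≠ b' := fun h => hA'B' (by rw [h])
          have key : a ∩ b = a' ∩ b' := hPint a ha b hb' a' ha' b' hb'' hab hab'
          ext x
          simp only [Finset.mem_inter, Finset.mem_insert]
          constructor
          · rintro ⟨rfl | hx1, hx2⟩
            · exact ⟨Or.inl rfl, Or.inl rfl⟩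
            · rcases hx2 with rfl | hx2
              · exact ⟨Or.inl rfl, Or.inl rfl⟩
              · have : x ∈ a' ∩ b' := key ▸ Finset.mem_inter.2 ⟨hx1, hx2⟩
                rw [Finset.mem_inter] at this
                exact ⟨Or.inr this.1, Or.inr this.2⟩
          · rintro ⟨rfl | hx1, hx2⟩
            · exact ⟨Or.inl rfl, Or.inl rfl⟩
            · rcases hx2 with rfl | hx2
              · exact ⟨Or.inl rfl, Or.inl rfl⟩
              · have : x ∈ a ∩ b := key ▸ Finset.mem_inter.2 ⟨hx1, hx2⟩
                rw [Finset.mem_inter] at this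
                exact ⟨Or.inr this.1, Or.inr this.2⟩
      · rintro ⟨x, y, hxy, Sx, hSx, Sy, hSy, Sxy, hSxy, h1, h2, h3⟩
        apply hpat
        have hxm : x ≠ m := by
          intro h; subst h
          have : x ∈ ({x, y} : Finset α) ∩ Sx := by
            rw [h1]; exact Finset.mem_singleton_self x
          exact hmnotL Sx hSx (Finset.mem_inter.1 this).2
        have hym : y ≠ m := by
          intro h; subst h
          have : y ∈ ({x, y} : Finset α) ∩ Sy := by
            rw [h2]; exact Finset.mem_singleton_self y
          exact hmnotL Sy hSy (Finset.mem_inter.1 this).2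
        have hmxy : m ∉ ({x, y} : Finset α) := by
          simp only [Finset.mem_insert, Finset.mem_singleton]
          push_neg
          exact ⟨Ne.symm hxm, Ne.symm hym⟩
        obtain ⟨Tx, hTx, hTxe⟩ := Finset.mem_image.1 hSx
        obtain ⟨Ty, hTy, hTye⟩ := Finset.mem_image.1 hSy
        obtain ⟨Txy, hTxy, hTxye⟩ := Finset.mem_image.1 hSxy
        rw [hmemHm] at hTx hTy hTxy
        have ex : ({x, y} : Finset α) ∩ Tx = {x} := by
          rw [← Finset.insert_erase hTx.2, Finset.inter_insert_of_notMem hmxy, hTxe, h1]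
        have ey : ({x, y} : Finset α) ∩ Ty = {y} := by
          rw [← Finset.insert_erase hTy.2, Finset.inter_insert_of_notMem hmxy, hTye, h2]
        have exy : ({x, y} : Finset α) ∩ Txy = {x, y} := by
          rw [← Finset.insert_erase hTxy.2, Finset.inter_insert_of_notMem hmxy, hTxye, h3]
        exact ⟨x, y, hxy, Tx, hTx.1, Ty, hTy.1, Txy, hTxy.1, ex, ey, exy⟩
    -- covering of H
    have hHsub : H ⊆ insert ∅ (M.biUnion (fun m => H.filter (fun T => m ∈ T))) := by
      intro T hT
      rcases T.eq_empty_or_nonempty with rfl | hTne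
      · exact Finset.mem_insert_self _ _
      refine Finset.mem_insert_of_mem ?_
      rw [Finset.mem_biUnion]
      by_cases hTD : T ∈ D
      · have hTDn : T ∈ Dn := by rw [hDn, Finset.mem_filter]; exact ⟨hTD, hTne⟩
        refine ⟨f T hTDn, ?_, ?_⟩
        · rw [hM]; exact Finset.mem_image.2 ⟨⟨T, hTDn⟩, Finset.mem_attach _ _, rfl⟩
        · rw [Finset.mem_filter]; exact ⟨hT, hf1 T hTDn⟩
      · obtain ⟨S, hSD, u, hu⟩ := hcover T hT hTD
        rw [Finset.mem_inter] at hu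
        have hSDn : S ∈ Dn := by
          rw [hDn, Finset.mem_filter]; exact ⟨hSD, ⟨u, hu.1⟩⟩
        refine ⟨f S hSDn, ?_, ?_⟩
        · rw [hM]; exact Finset.mem_image.2 ⟨⟨S, hSDn⟩, Finset.mem_attach _ _, rfl⟩
        · rw [Finset.mem_filter]
          exact ⟨hT, hf2 S hSDn u hu.1 T hT hu.2⟩
    have hbiU : (M.biUnion (fun m => H.filter (fun T => m ∈ T))).card
        ≤ M.card * (r - 1) ^ ℓ := by
      calc (M.biUnion (fun m => H.filter (fun T => m ∈ T))).card
          ≤ ∑ m ∈ M, (H.filter (fun T => m ∈ T)).card := Finset.card_biUnion_le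
        _ ≤ M.card • ((r - 1) ^ ℓ) := Finset.sum_le_card_nsmul _ _ _ (fun m _ => hlink m)
        _ = M.card * (r - 1) ^ ℓ := by rw [smul_eq_mul]
    have hp1 : 1 ≤ (r - 1) ^ ℓ := Nat.one_le_pow _ _ (by omega)
    by_cases hES : (∅ : Finset α) ∈ H
    · -- then ∅ ∈ D
      have hED : (∅ : Finset α) ∈ D := by
        by_contra hED
        have hmem : insert ∅ D ∈ 𝒟 := by
          refine (hmem𝒟 _).2 ⟨Finset.insert_subset hES hDsub, ?_⟩
          intro A hA B hB hAB
          rcases Finset.mem_insert.1 hA with rfl | hA' <;>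
            rcases Finset.mem_insert.1 hB with rfl | hB'
          · exact absurd rfl hAB
          · exact Finset.empty_inter _
          · exact Finset.inter_empty _
          · exact hDdisj A hA' B hB' hAB
        exact hmax _ hmem (Finset.ssubset_insert hED)
      have hDnsub : Dn ⊆ D.erase ∅ := by
        intro S hS
        rw [hDn, Finset.mem_filter] at hS
        exact Finset.mem_erase.2 ⟨Finset.nonempty_iff_ne_empty.1 hS.2, hS.1⟩
      have hDncard : Dn.card ≤ r - 2 := by
        have h1 : Dn.card ≤ (D.erase ∅).card := Finset.card_le_card hDnsub
        have h2 : (D.erase ∅).card = D.card - 1 := Finset.card_erase_of_mem hED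
        omega
      have hMc : M.card ≤ r - 2 := le_trans hMcard hDncard
      calc H.card ≤ (insert ∅ (M.biUnion (fun m => H.filter (fun T => m ∈ T)))).card :=
            Finset.card_le_card hHsub
        _ ≤ (M.biUnion (fun m => H.filter (fun T => m ∈ T))).card + 1 :=
            Finset.card_insert_le _ _
        _ ≤ M.card * (r - 1) ^ ℓ + 1 := by omega
        _ ≤ (r - 2) * (r - 1) ^ ℓ + 1 * (r - 1) ^ ℓ := by
            have := Nat.mul_le_mul_right ((r - 1) ^ ℓ) hMc
            omega
        _ = (r - 2 + 1) * (r - 1) ^ ℓ := (add_mul _ _ _).symm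
        _ = (r - 1) * (r - 1) ^ ℓ := by congr 1; omega
        _ = (r - 1) ^ (ℓ + 1) := by rw [pow_succ, mul_comm]
    · have hHsub' : H ⊆ M.biUnion (fun m => H.filter (fun T => m ∈ T)) := by
        intro T hT
        rcases Finset.mem_insert.1 (hHsub hT) with rfl | h
        · exact absurd hT hES
        · exact h
      have hMc : M.card ≤ r - 1 := by
        refine le_trans hMcard (le_trans ?_ hDcard)
        exact Finset.card_le_card (Finset.filter_subset _ _)
      calc H.card ≤ (M.biUnion (fun m => H.filter (fun T => m ∈ T))).card :=
            Finset.card_le_card hHsub'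
        _ ≤ M.card * (r - 1) ^ ℓ := hbiU
        _ ≤ (r - 1) * (r - 1) ^ ℓ := Nat.mul_le_mul_right _ hMc
        _ = (r - 1) ^ (ℓ + 1) := by rw [pow_succ, mul_comm]

end Aux

/-- Let `H` be an `ℓ`-bounded family of sets with `|H| > (r-1)^ℓ`. If `H` contains
no `r`-sunflower, then there are distinct elements `x, y` and sets
`Sx, Sy, Sxy ∈ H` with `{x,y} ∩ Sx = {x}`, `{x,y} ∩ Sy = {y}`, `{x,y} ∩ Sxy = {x,y}`. -/
theorem stmt2 {α : Type*} [DecidableEq α] (H : Finset (Finset α)) (ℓ r : ℕ)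
    (hb : ∀ S ∈ H, S.card ≤ ℓ) (hcard : (r - 1) ^ ℓ < H.card)
    (hno : ¬ HasSunflower H r) :
    ∃ x y : α, x ≠ y ∧ ∃ Sx ∈ H, ∃ Sy ∈ H, ∃ Sxy ∈ H,
      ({x, y} : Finset α) ∩ Sx = {x} ∧
      ({x, y} : Finset α) ∩ Sy = {y} ∧
      ({x, y} : Finset α) ∩ Sxy = {x, y} := by
  classical
  match r, hno with
  | 0, hno =>
    exact absurd ⟨∅, Finset.empty_subset _, by simp, by simp⟩ hno
  | 1, hno =>
    exfalso
    have hHe : H = ∅ := by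
      by_contra h
      obtain ⟨A, hA⟩ := Finset.nonempty_iff_ne_empty.2 h
      refine hno ⟨{A}, Finset.singleton_subset_iff.2 hA, Finset.card_singleton _, ?_⟩
      intro B hB C hC _ _ _ _ hBC _
      rw [Finset.mem_singleton] at hB hC
      exact absurd (hB.trans hC.symm) hBC
    rw [hHe] at hcard
    simp at hcard
  | (n + 2), hno =>
    by_contra hpat
    have := bound_card (n + 2) (by omega) ℓ H hb hno hpat
    omega
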